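/- Let f : ℝ^m × ℝ^n → ℝ be ℓ-smooth with f(x,·) concave on a convex compact set Y for each x, and f(·,y) L-Lipschitz for each y ∈ Y. Then Φ(x) = max_{y∈Y} f(x,y) is ℓ-weakly convex (i.e., Φ + (ℓ/2)‖·‖² is convex) and L-Lipschitz, and for any maximizer y*(x) ∈ argmax_{y∈Y} f(x,y), ∇_x f(x, y*(x)) is a subgradient of Φ + (ℓ/2)‖·‖² minus ℓx, i.e., ∇_x f(x, y*(x)) ∈ ∂Φ(x). -/

import Mathlib

open Set
open scoped RealInnerProductSpace


section Aux

variable {E : Type*} [NormedAddCommGroup E] [InnerProductSpace ℝ E] [CompleteSpace E]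

lemma aux_line_hasDerivAt (g : E → ℝ) (G : E → E) (hg : ∀ x, HasGradientAt g (G x) x)
    (a v : E) (t : ℝ) :
    HasDerivAt (fun s : ℝ => g (a + s • v)) ⟪G (a + t • v), v⟫ t := by
  have h1 : HasDerivAt (fun s : ℝ => a + s • v) v t := by
    simpa using ((hasDerivAt_id t).smul_const v).const_add a
  have h2 := (hasGradientAt_iff_hasFDerivAt.mp (hg (a + t • v))).comp_hasDerivAt t h1
  simpa [InnerProductSpace.toDual_apply_apply, Function.comp_def] using h2

lemma aux_convex_tangent (g : E → ℝ) (G : E → E) (hg : ∀ x, HasGradientAt g (G x) x)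
    (hmono : ∀ a b : E, 0 ≤ ⟪G a - G b, a - b⟫) :
    ConvexOn ℝ univ g ∧ ∀ x x' : E, g x + ⟪G x, x' - x⟫ ≤ g x' := by
  have key : ∀ a v : E, ConvexOn ℝ univ (fun s : ℝ => g (a + s • v)) := by
    intro a v
    have hφd : ∀ t : ℝ, HasDerivAt (fun s : ℝ => g (a + s • v)) ⟪G (a + t • v), v⟫ t :=
      aux_line_hasDerivAt g G hg a v
    have hdiff : Differentiable ℝ (fun s : ℝ => g (a + s • v)) :=
      fun t => (hφd t).differentiableAt
    refine Monotone.convexOn_univ_of_deriv hdiff ?_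
    intro s t hst
    rw [(hφd s).deriv, (hφd t).deriv]
    rcases eq_or_lt_of_le hst with h | h
    · rw [h]
    · have h0 := hmono (a + t • v) (a + s • v)
      have he : (a + t • v) - (a + s • v) = (t - s) • v := by
        rw [sub_smul]; abel
      rw [he, real_inner_smul_right, inner_sub_left] at h0
      nlinarith
  constructor
  · refine ⟨convex_univ, fun a _ b _ p q hp hq hpq => ?_⟩
    have h := (key a (b - a)).2 (mem_univ (0:ℝ)) (mem_univ (1:ℝ)) hp hq hpq
    simp only [smul_eq_mul, mul_zero, mul_one, zero_add, zero_smul, add_zero, one_smul] at h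
    have hp1 : p = 1 - q := by linarith
    have e1 : a + q • (b - a) = p • a + q • b := by rw [hp1]; module
    have e2 : a + (b - a) = b := by abel
    rw [e1, e2] at h
    exact h
  · intro x x'
    have hconvφ := key x (x' - x)
    have hd0 : HasDerivAt (fun s : ℝ => g (x + s • (x' - x))) ⟪G x, x' - x⟫ 0 := by
      have := aux_line_hasDerivAt g G hg x (x' - x) 0
      simpa using this
    have hs := hconvφ.le_slope_of_hasDerivAt (mem_univ (0:ℝ)) (mem_univ 1) one_pos hd0
    rw [slope_def_field] at hs
    simp only [zero_smul, add_zero, one_smul, sub_zero, div_one] at hs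
    have e2 : x + (x' - x) = x' := by abel
    rw [e2] at hs
    linarith

lemma aux_hasGradient_add_sq (g : E → ℝ) (G : E) (x : E) (c : ℝ)
    (hg : HasGradientAt g G x) :
    HasGradientAt (fun z => g z + c / 2 * ‖z‖ ^ 2) (G + c • x) x := by
  have hfun : (fun z : E => g z + c / 2 * ‖z‖ ^ 2)
      = fun z => g z + c / 2 * ⟪z, z⟫ := by
    funext z; rw [real_inner_self_eq_norm_sq]
  rw [hasGradientAt_iff_hasFDerivAt] at hg ⊢
  rw [hfun]
  have hsq := ((hasFDerivAt_id x).inner ℝ (hasFDerivAt_id x)).const_mul (c / 2)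
  have hadd := hg.add hsq
  convert hadd using 1
  · rfl
  · rfl
  · rfl
  apply ContinuousLinearMap.ext
  intro v
  simp [InnerProductSpace.toDual_apply_apply, inner_add_left, real_inner_smul_left,
    fderivInnerCLM_apply, real_inner_comm]
  ring

end Aux

/-- In the nonconvex-concave setting, `Φ(x) = max_{y∈Y} f x y` is
ℓ-weakly convex (`Φ + (ℓ/2)‖·‖²` is convex) and L-Lipschitz, and for any maximizer
`y*(x)`, `∇_x f(x, y*(x)) ∈ ∂Φ(x)`, i.e. it is a subgradient of `Φ + (ℓ/2)‖·‖²`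
at `x` minus `ℓ x`. -/
theorem statement2 {m n : ℕ} (f : EuclideanSpace ℝ (Fin m) → EuclideanSpace ℝ (Fin n) → ℝ)
    (ℓ L : ℝ) (hℓ : 0 < ℓ) (hL : 0 < L)
    (Y : Set (EuclideanSpace ℝ (Fin n))) (hYconv : Convex ℝ Y) (hYcomp : IsCompact Y)
    (hYne : Y.Nonempty)
    (gx : EuclideanSpace ℝ (Fin m) → EuclideanSpace ℝ (Fin n) → EuclideanSpace ℝ (Fin m))
    (gy : EuclideanSpace ℝ (Fin m) → EuclideanSpace ℝ (Fin n) → EuclideanSpace ℝ (Fin n))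
    (hgx : ∀ x y, HasGradientAt (fun x' => f x' y) (gx x y) x)
    (hgy : ∀ x y, HasGradientAt (fun y' => f x y') (gy x y) y)
    (hsmooth : ∀ x x' y y',
      ‖gx x y - gx x' y'‖ ≤ ℓ * (‖x - x'‖ + ‖y - y'‖) ∧
      ‖gy x y - gy x' y'‖ ≤ ℓ * (‖x - x'‖ + ‖y - y'‖))
    (hconc : ∀ x, ConcaveOn ℝ Y (f x))
    (hLip : ∀ y ∈ Y, ∀ x x', |f x y - f x' y| ≤ L * ‖x - x'‖)
    (Φ : EuclideanSpace ℝ (Fin m) → ℝ) (hΦ : ∀ x, Φ x = sSup (f x '' Y)) :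
    (ConvexOn ℝ univ (fun x => Φ x + ℓ / 2 * ‖x‖ ^ 2)) ∧
    (∀ x x', |Φ x - Φ x'| ≤ L * ‖x - x'‖) ∧
    (∀ x, ∀ ys ∈ Y, IsMaxOn (f x) Y ys →
      ∀ x', Φ x' + ℓ / 2 * ‖x'‖ ^ 2 ≥
        Φ x + ℓ / 2 * ‖x‖ ^ 2 + ⟪gx x ys + ℓ • x, x' - x⟫) := by
  -- gradient of the augmented function
  have hgrad : ∀ y z, HasGradientAt (fun z' => f z' y + ℓ / 2 * ‖z'‖ ^ 2)
      (gx z y + ℓ • z) z := fun y z => aux_hasGradient_add_sq _ _ z ℓ (hgx z y)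
  -- monotonicity of the augmented gradient
  have hmono : ∀ y, ∀ a b : EuclideanSpace ℝ (Fin m),
      0 ≤ ⟪(gx a y + ℓ • a) - (gx b y + ℓ • b), a - b⟫ := by
    intro y a b
    have he : (gx a y + ℓ • a) - (gx b y + ℓ • b) = (gx a y - gx b y) + ℓ • (a - b) := by
      rw [smul_sub]; abel
    rw [he, inner_add_left, real_inner_smul_left, real_inner_self_eq_norm_sq]
    have h1 : ‖gx a y - gx b y‖ ≤ ℓ * ‖a - b‖ := by
      have := (hsmooth a b y y).1
      simpa using this
    have h2 : |⟪gx a y - gx b y, a - b⟫| ≤ ‖gx a y - gx b y‖ * ‖a - b‖ :=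
      abs_real_inner_le_norm _ _
    have h3 : -(ℓ * ‖a - b‖ * ‖a - b‖) ≤ ⟪gx a y - gx b y, a - b⟫ := by
      have := neg_abs_le ⟪gx a y - gx b y, a - b⟫
      nlinarith [norm_nonneg (a - b)]
    nlinarith [norm_nonneg (a - b)]
  have haux : ∀ y, ConvexOn ℝ univ (fun z => f z y + ℓ / 2 * ‖z‖ ^ 2) ∧
      ∀ x x', (f x y + ℓ / 2 * ‖x‖ ^ 2) + ⟪gx x y + ℓ • x, x' - x⟫
        ≤ f x' y + ℓ / 2 * ‖x'‖ ^ 2 :=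
    fun y => aux_convex_tangent _ (fun z => gx z y + ℓ • z) (hgrad y) (hmono y)
  -- continuity in y, boundedness, attainment
  have hconty : ∀ x, Continuous (f x) := by
    intro x
    rw [continuous_iff_continuousAt]
    exact fun y => (hgy x y).differentiableAt.continuousAt
  have hbdd : ∀ x, BddAbove (f x '' Y) :=
    fun x => (hYcomp.image (hconty x)).bddAbove
  have hle : ∀ x, ∀ y ∈ Y, f x y ≤ Φ x := by
    intro x y hy
    rw [hΦ]
    exact le_csSup (hbdd x) (mem_image_of_mem _ hy)
  have hattain : ∀ x, ∃ y ∈ Y, Φ x = f x y := by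
    intro x
    obtain ⟨y0, hy0, hmax⟩ := hYcomp.exists_isMaxOn hYne (hconty x).continuousOn
    refine ⟨y0, hy0, ?_⟩
    rw [hΦ]
    refine IsGreatest.csSup_eq ⟨mem_image_of_mem (f x) hy0, ?_⟩
    rintro z ⟨y, hy, rfl⟩
    exact isMaxOn_iff.mp hmax y hy
  refine ⟨?_, ?_, ?_⟩
  · -- convexity
    refine ⟨convex_univ, fun a _ b _ p q hp hq hpq => ?_⟩
    simp only [smul_eq_mul]
    have hne : (f (p • a + q • b) '' Y).Nonempty := hYne.image _
    have hbound : sSup (f (p • a + q • b) '' Y)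
        ≤ p * (Φ a + ℓ / 2 * ‖a‖ ^ 2) + q * (Φ b + ℓ / 2 * ‖b‖ ^ 2)
          - ℓ / 2 * ‖p • a + q • b‖ ^ 2 := by
      refine csSup_le hne ?_
      rintro z ⟨y, hy, rfl⟩
      have h := (haux y).1.2 (mem_univ a) (mem_univ b) hp hq hpq
      simp only [smul_eq_mul] at h
      have ha := hle a y hy
      have hb := hle b y hy
      nlinarith
    rw [hΦ (p • a + q • b)]
    linarith
  · -- Lipschitz
    intro x x'
    obtain ⟨y0, hy0, hx0⟩ := hattain x
    obtain ⟨y1, hy1, hx1⟩ := hattain x'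
    rw [abs_sub_le_iff]
    constructor
    · have h1 : f x y0 - f x' y0 ≤ L * ‖x - x'‖ :=
        le_trans (le_abs_self _) (hLip y0 hy0 x x')
      have h2 := hle x' y0 hy0
      linarith [hx0]
    · have h1 : f x' y1 - f x y1 ≤ L * ‖x' - x‖ :=
        le_trans (le_abs_self _) (hLip y1 hy1 x' x)
      have h2 := hle x y1 hy1
      rw [norm_sub_rev] at h1
      linarith [hx1]
  · -- subgradient
    intro x ys hys hmax x'
    have hΦx : Φ x = f x ys := by
      rw [hΦ]
      refine IsGreatest.csSup_eq ⟨mem_image_of_mem (f x) hys, ?_⟩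
      rintro z ⟨y, hy, rfl⟩
      exact isMaxOn_iff.mp hmax y hy
    have htan := (haux ys).2 x x'
    have hΦx' := hle x' ys hys
    rw [hΦx]
    linarith
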